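/- Let R → S be a homomorphism of commutative rings inducing a surjective map Spec S → Spec R, and let R → R' be any homomorphism of commutative rings. Then the induced map Spec(R' ⊗_R S) → Spec R' is surjective. -/
import Mathlib


open TensorProduct

set_option maxHeartbeats 1000000
set_option synthInstance.maxHeartbeats 400000

/-- Let `R → S` be a homomorphism of commutative rings inducing a
surjective map `Spec S → Spec R`, and let `R → R'` be any homomorphism of commutative
rings.  Then the induced map `Spec (R' ⊗_R S) → Spec R'` is surjective. -/
theorem primeSpectrum_comap_surjective_of_baseChange
    (R S R' : Type) [CommRing R] [CommRing S] [CommRing R']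
    [Algebra R S] [Algebra R R']
    (h : Function.Surjective (PrimeSpectrum.comap (algebraMap R S))) :
    Function.Surjective (PrimeSpectrum.comap (algebraMap R' (R' ⊗[R] S))) := by
  intro p'
  set p : PrimeSpectrum R := PrimeSpectrum.comap (algebraMap R R') p' with hp
  obtain ⟨q, hq⟩ := h p
  -- quotients
  let A := R ⧸ p.asIdeal
  let A' := R' ⧸ p'.asIdeal
  let B := S ⧸ q.asIdeal
  have hp'comap : p'.asIdeal.comap (algebraMap R R') = p.asIdeal := rfl
  have hqcomap : q.asIdeal.comap (algebraMap R S) = p.asIdeal := congrArg PrimeSpectrum.asIdeal hq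
  -- induced maps on quotients
  let φ' : A →+* A' := Ideal.quotientMap p'.asIdeal (algebraMap R R') hp'comap.ge
  let φS : A →+* B := Ideal.quotientMap q.asIdeal (algebraMap R S) hqcomap.ge
  have hφ'inj : Function.Injective φ' := Ideal.quotientMap_injective' hp'comap.le
  have hφSinj : Function.Injective φS := Ideal.quotientMap_injective' hqcomap.le
  -- fraction fields
  let K := FractionRing A
  let L := FractionRing A'
  let M := FractionRing B
  have hgLinj : Function.Injective ((algebraMap A' L).comp φ') :=
    (IsFractionRing.injective A' L).comp hφ'inj
  have hgMinj : Function.Injective ((algebraMap B M).comp φS) :=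
    (IsFractionRing.injective B M).comp hφSinj
  letI : Algebra K L := RingHom.toAlgebra (IsFractionRing.lift hgLinj)
  letI : Algebra K M := RingHom.toAlgebra (IsFractionRing.lift hgMinj)
  let C := L ⊗[K] M
  haveI : Module.FaithfullyFlat K L := inferInstance
  haveI : Nontrivial C := Module.FaithfullyFlat.lTensor_nontrivial K L M
  -- ring homs into C
  let ρL : R' →+* C := (Algebra.TensorProduct.includeLeftRingHom (R := K) (A := L) (B := M)).comp
    ((algebraMap A' L).comp (Ideal.Quotient.mk p'.asIdeal))
  let ρM : S →+* C := (Algebra.TensorProduct.includeRight (R := K) (A := L) (B := M)).toRingHom.comp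
    ((algebraMap B M).comp (Ideal.Quotient.mk q.asIdeal))
  letI : Algebra R C := RingHom.toAlgebra (ρL.comp (algebraMap R R'))
  have key : ρL.comp (algebraMap R R') = ρM.comp (algebraMap R S) := by
    ext r
    show (Algebra.TensorProduct.includeLeftRingHom
        ((algebraMap A' L) (Ideal.Quotient.mk p'.asIdeal (algebraMap R R' r)))) =
      (Algebra.TensorProduct.includeRight
        ((algebraMap B M) (Ideal.Quotient.mk q.asIdeal (algebraMap R S r))))
    have e1 : Ideal.Quotient.mk p'.asIdeal (algebraMap R R' r)
        = φ' (Ideal.Quotient.mk p.asIdeal r) := (Ideal.quotientMap_mk).symm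
    have e2 : Ideal.Quotient.mk q.asIdeal (algebraMap R S r)
        = φS (Ideal.Quotient.mk p.asIdeal r) := (Ideal.quotientMap_mk).symm
    rw [e1, e2]
    set a : A := Ideal.Quotient.mk p.asIdeal r
    have e3 : (algebraMap A' L) (φ' a) = algebraMap K L (algebraMap A K a) := by
      show _ = IsFractionRing.lift hgLinj (algebraMap A K a)
      rw [IsFractionRing.lift_algebraMap]
      rfl
    have e4 : (algebraMap B M) (φS a) = algebraMap K M (algebraMap A K a) := by
      show _ = IsFractionRing.lift hgMinj (algebraMap A K a)
      rw [IsFractionRing.lift_algebraMap]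
      rfl
    rw [e3, e4]
    show (algebraMap K L (algebraMap A K a)) ⊗ₜ[K] (1 : M)
      = (1 : L) ⊗ₜ[K] (algebraMap K M (algebraMap A K a))
    rw [← Algebra.TensorProduct.algebraMap_apply, Algebra.TensorProduct.algebraMap_apply']
  let α : R' →ₐ[R] C := { ρL with commutes' := fun r => rfl }
  let β : S →ₐ[R] C := { ρM with
    commutes' := fun r => (RingHom.congr_fun key r).symm }
  let ψ := Algebra.TensorProduct.productMap α β
  -- a prime of C
  obtain ⟨m, hm⟩ := Ideal.exists_maximal C
  haveI := hm.isPrime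
  refine ⟨PrimeSpectrum.comap ψ.toRingHom ⟨m, hm.isPrime⟩, ?_⟩
  rw [← PrimeSpectrum.comap_comp_apply]
  have hψ : ψ.toRingHom.comp (algebraMap R' (R' ⊗[R] S)) = ρL := by
    ext x
    show ψ (x ⊗ₜ 1) = ρL x
    rw [Algebra.TensorProduct.productMap_left_apply]
    rfl
  rw [hψ]
  -- now compute the comap of m along ρL
  ext x
  show ρL x ∈ m ↔ x ∈ p'.asIdeal
  have hLprime : (m.comap (Algebra.TensorProduct.includeLeftRingHom (R := K) (A := L)
      (B := M))).IsPrime := Ideal.comap_isPrime _ m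
  have hLbot : m.comap (Algebra.TensorProduct.includeLeftRingHom (R := K) (A := L) (B := M))
      = ⊥ := Ideal.eq_bot_of_prime _
  constructor
  · intro hx
    have : (algebraMap A' L) (Ideal.Quotient.mk p'.asIdeal x) ∈
        m.comap (Algebra.TensorProduct.includeLeftRingHom (R := K) (A := L) (B := M)) := hx
    rw [hLbot, Ideal.mem_bot] at this
    have h0 : Ideal.Quotient.mk p'.asIdeal x = 0 :=
      (map_eq_zero_iff _ (IsFractionRing.injective A' L)).mp this
    exact Ideal.Quotient.eq_zero_iff_mem.mp h0
  · intro hx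
    have : Ideal.Quotient.mk p'.asIdeal x = 0 := Ideal.Quotient.eq_zero_iff_mem.mpr hx
    show Algebra.TensorProduct.includeLeftRingHom
      ((algebraMap A' L) (Ideal.Quotient.mk p'.asIdeal x)) ∈ m
    rw [this, map_zero, map_zero]
    exact m.zero_mem
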